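/- If $f, g$ is a $p$-reduced pair of polynomials in $\mathbb{C}[X_1,\ldots,X_n]$, then $p > 1$. That is, if $f, g$ are algebraically independent with $\deg f < \deg g$, their leading forms $\bar f, \bar g$ are algebraically dependent, and $\bar f \notin \mathbb{C}[\bar g]$, $\bar g \notin \mathbb{C}[\bar f]$, then $\deg f / \gcd(\deg f, \deg g) > 1$, equivalently $\deg f$ does not divide $\deg g$. -/

import Mathlib

open MvPolynomial

lemma weight_two (d e : ℕ) (m : Fin 2 →₀ ℕ) :
    (Finsupp.weight ![d, e] m : ℕ) = m 0 * d + m 1 * e := by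
  rw [Finsupp.weight_apply, Finsupp.sum_fintype]
  · simp [Fin.sum_univ_two, mul_comm]
  · intro i; simp

lemma aeval_hom {n d e N : ℕ} {F G : MvPolynomial (Fin n) ℂ}
    (hF : F.IsHomogeneous d) (hG : G.IsHomogeneous e) (P : MvPolynomial (Fin 2) ℂ)
    (hP : P.IsWeightedHomogeneous ![d, e] N) :
    (aeval ![F, G] P).IsHomogeneous N := by
  rw [P.as_sum, map_sum]
  apply IsHomogeneous.sum
  intro m hm
  rw [aeval_monomial]
  have hw : m 0 * d + m 1 * e = N := by
    rw [← weight_two d e m]; exact hP (mem_support_iff.mp hm)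
  have hprod : (m.prod fun i k => (![F, G] i) ^ k) = F ^ m 0 * G ^ m 1 := by
    rw [Finsupp.prod_fintype]
    · simp [Fin.prod_univ_two]
    · intro i; simp
  rw [hprod, algebraMap_eq]
  have h1 : (F ^ m 0).IsHomogeneous (d * m 0) := hF.pow (m 0)
  have h2 : (G ^ m 1).IsHomogeneous (e * m 1) := hG.pow (m 1)
  have := ((isHomogeneous_C (Fin n) (coeff m P)).mul (h1.mul h2))
  rw [zero_add] at this
  have hN : N = d * m 0 + e * m 1 := by rw [← hw]; ring
  rw [hN]
  exact this

lemma aeval_component_zero {n d e : ℕ} {F G : MvPolynomial (Fin n) ℂ}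
    (hF : F.IsHomogeneous d) (hG : G.IsHomogeneous e) (P : MvPolynomial (Fin 2) ℂ)
    (h0 : aeval ![F, G] P = 0) (N : ℕ) :
    aeval ![F, G] (weightedHomogeneousComponent ![d, e] N P) = 0 := by
  classical
  set u : ℕ → MvPolynomial (Fin n) ℂ :=
    fun M => aeval ![F, G] (weightedHomogeneousComponent ![d, e] M P) with hu
  have hcfin : (Function.support fun M => weightedHomogeneousComponent ![d, e] M P).Finite :=
    weightedHomogeneousComponent_finsupp P
  have hufin : (Function.support u).Finite := by
    apply hcfin.subset
    intro M hM
    simp only [Function.mem_support] at hM ⊢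
    intro h; apply hM; rw [hu]; simp [h]
  have hN : ∀ M, u M ∈ homogeneousSubmodule (Fin n) ℂ M := by
    intro M
    rw [mem_homogeneousSubmodule]
    exact aeval_hom hF hG _ (weightedHomogeneousComponent_isWeightedHomogeneous M P)
  have hsum : (∑ᶠ M, u M) = 0 := by
    have hmap := AddMonoidHom.map_finsum ((aeval ![F, G] :
        MvPolynomial (Fin 2) ℂ →ₐ[ℂ] MvPolynomial (Fin n) ℂ)).toRingHom.toAddMonoidHom hcfin
    rw [sum_weightedHomogeneousComponent] at hmap
    simp only [RingHom.toAddMonoidHom_eq_coe, AddMonoidHom.coe_coe, AlgHom.coe_toRingHom,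
      AlgHom.toRingHom_eq_coe, RingHom.coe_coe] at hmap
    rw [hu, ← hmap, h0]
  have key : u N = 0 := by
    have h1 : homogeneousComponent N (∑ᶠ M, u M) = ∑ᶠ M, homogeneousComponent N (u M) :=
      AddMonoidHom.map_finsum (homogeneousComponent N).toAddMonoidHom hufin
    have h2 : (∑ᶠ M, homogeneousComponent N (u M)) = u N := by
      have h3 : ∀ M, homogeneousComponent N (u M) = if N = M then u M else 0 :=
        fun M => homogeneousComponent_of_mem (hN M)
      calc (∑ᶠ M, homogeneousComponent N (u M)) = ∑ᶠ M, if N = M then u M else 0 := by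
            exact finsum_congr h3
        _ = u N := by
            rw [finsum_eq_single _ N (fun M hM => if_neg (Ne.symm hM))]
            exact if_pos rfl
    rw [hsum] at h1
    simp only [map_zero] at h1
    rw [← h2, ← h1]
  exact key

lemma key_lemma {n d e k N : ℕ} (hd : 0 < d) (hk : e = d * k)
    {F G : MvPolynomial (Fin n) ℂ} (hFne : F ≠ 0)
    (P : MvPolynomial (Fin 2) ℂ) (hPne : P ≠ 0)
    (hP : P.IsWeightedHomogeneous ![d, e] N)
    (h0 : aeval ![F, G] P = 0) :
    ∃ c : ℂ, G = C c * F ^ k := by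
  classical
  have hψinj : Function.Injective
      (algebraMap (MvPolynomial (Fin n) ℂ) (FractionRing (MvPolynomial (Fin n) ℂ))) :=
    IsFractionRing.injective _ _
  set K := FractionRing (MvPolynomial (Fin n) ℂ) with hKdef
  set fK : K := algebraMap (MvPolynomial (Fin n) ℂ) K F with hfK
  set gK : K := algebraMap (MvPolynomial (Fin n) ℂ) K G with hgK
  have fKne : fK ≠ 0 := by
    intro h
    exact hFne (hψinj (by rw [← hfK, h, map_zero]))
  -- the common "reduced degree"
  obtain ⟨m₀, hm₀⟩ := Finset.nonempty_iff_ne_empty.mpr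
    (fun h => hPne (support_eq_empty.mp h))
  set S : ℕ := m₀ 0 + k * m₀ 1 with hS0
  have hS : ∀ m ∈ P.support, m 0 + k * m 1 = S := by
    intro m hm
    have h1 := hP (mem_support_iff.mp hm)
    have h2 := hP (mem_support_iff.mp hm₀)
    rw [weight_two] at h1 h2
    have e1 : d * (m 0 + k * m 1) = m 0 * d + m 1 * e := by rw [hk]; ring
    have e2 : d * (m₀ 0 + k * m₀ 1) = m₀ 0 * d + m₀ 1 * e := by rw [hk]; ring
    exact Nat.eq_of_mul_eq_mul_left hd (by rw [e1, e2, h1, h2])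
  -- push the relation into the fraction field
  have h0K : (aeval ![fK, gK] P : K) = 0 := by
    have hmap := congrArg (IsScalarTower.toAlgHom ℂ (MvPolynomial (Fin n) ℂ) K) h0
    rw [map_zero] at hmap
    have hx : (fun i => (IsScalarTower.toAlgHom ℂ (MvPolynomial (Fin n) ℂ) K) (![F, G] i))
        = ![fK, gK] := by
      funext i
      fin_cases i <;> simp [hfK, hgK]
    rw [← hmap, ← AlgHom.comp_apply, comp_aeval, hx]
  rw [P.as_sum, map_sum] at h0K
  have hterm : ∀ m ∈ P.support,
      (aeval ![fK, gK] (monomial m (coeff m P)) : K)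
        = algebraMap ℂ K (coeff m P) * (fK ^ (m 0) * gK ^ (m 1)) := by
    intro m hm
    rw [aeval_monomial]
    congr 1
    rw [Finsupp.prod_fintype]
    · simp [Fin.prod_univ_two]
    · intro i; simp
  set s : K := gK / fK ^ k with hs
  have hgs : gK = fK ^ k * s := by
    rw [hs]
    rw [mul_div_cancel₀ _ (pow_ne_zero _ fKne)]
  have hterm2 : ∀ m ∈ P.support,
      (aeval ![fK, gK] (monomial m (coeff m P)) : K)
        = fK ^ S * (algebraMap ℂ K (coeff m P) * s ^ (m 1)) := by
    intro m hm
    rw [hterm m hm, hgs, mul_pow, ← pow_mul, ← hS m hm]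
    ring
  rw [Finset.sum_congr rfl hterm2, ← Finset.mul_sum] at h0K
  have hsum0 : (∑ m ∈ P.support, algebraMap ℂ K (coeff m P) * s ^ (m 1)) = 0 := by
    rcases mul_eq_zero.mp h0K with h | h
    · exact absurd h (pow_ne_zero _ fKne)
    · exact h
  -- injectivity of m ↦ m 1 on the support
  have hinj : ∀ m ∈ P.support, ∀ m' ∈ P.support, m 1 = m' 1 → m = m' := by
    intro m hm m' hm' h1
    have ha := hS m hm
    have hb := hS m' hm'
    rw [h1] at ha
    have h0' : m 0 = m' 0 := by omega
    ext i
    fin_cases i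
    · exact h0'
    · exact h1
  -- the annihilating one-variable polynomial
  set q : Polynomial ℂ := ∑ m ∈ P.support, Polynomial.C (coeff m P) * Polynomial.X ^ (m 1)
    with hq
  have hqs : Polynomial.aeval s q = 0 := by
    rw [hq, map_sum]
    rw [← hsum0]
    apply Finset.sum_congr rfl
    intro m hm
    simp [Algebra.smul_def]
  have hqcoeff : q.coeff (m₀ 1) = coeff m₀ P := by
    rw [hq, Polynomial.finset_sum_coeff]
    rw [Finset.sum_eq_single m₀]
    · simp
    · intro m hm hne
      simp only [Polynomial.coeff_C_mul, Polynomial.coeff_X_pow]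
      rw [if_neg (fun h => hne (hinj m hm m₀ hm₀ h.symm))]
      ring
    · intro h; exact absurd hm₀ h
  have hqne : q ≠ 0 := by
    intro h
    rw [h, Polynomial.coeff_zero] at hqcoeff
    exact (mem_support_iff.mp hm₀) hqcoeff.symm
  -- s is algebraic over ℂ, hence constant
  have hint : IsIntegral ℂ s := (IsAlgebraic.isIntegral ⟨q, hqne, hqs⟩)
  have hdeg1 : (minpoly ℂ s).degree = 1 :=
    IsAlgClosed.degree_eq_one_of_irreducible ℂ (minpoly.irreducible hint)
  obtain ⟨c, hc⟩ := RingHom.mem_range.mp (minpoly.degree_eq_one_iff.mp hdeg1)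
  refine ⟨c, hψinj ?_⟩
  rw [map_mul, map_pow, ← hfK, ← hgK, hgs, ← hc]
  rw [IsScalarTower.algebraMap_apply ℂ (MvPolynomial (Fin n) ℂ) K c, algebraMap_eq]
  ring

theorem p_reduced_pair_p_gt_one (n : ℕ) (f g : MvPolynomial (Fin n) ℂ)
    (hind : AlgebraicIndependent ℂ ![f, g])
    (hdeg : f.totalDegree < g.totalDegree)
    (hdep : ¬ AlgebraicIndependent ℂ
      ![homogeneousComponent f.totalDegree f, homogeneousComponent g.totalDegree g])
    (hfg : homogeneousComponent f.totalDegree f ∉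
      Algebra.adjoin ℂ ({homogeneousComponent g.totalDegree g} :
        Set (MvPolynomial (Fin n) ℂ)))
    (hgf : homogeneousComponent g.totalDegree g ∉
      Algebra.adjoin ℂ ({homogeneousComponent f.totalDegree f} :
        Set (MvPolynomial (Fin n) ℂ))) :
    ¬ f.totalDegree ∣ g.totalDegree := by
  intro hdvd
  obtain ⟨k, hk⟩ := hdvd
  set F := homogeneousComponent f.totalDegree f with hF
  set G := homogeneousComponent g.totalDegree g with hG
  have hFhom : F.IsHomogeneous f.totalDegree := homogeneousComponent_isHomogeneous _ f
  have hGhom : G.IsHomogeneous g.totalDegree := homogeneousComponent_isHomogeneous _ g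
  have hFne : F ≠ 0 := fun h => hfg (h ▸ Subalgebra.zero_mem _)
  have hd : 0 < f.totalDegree := by
    rcases Nat.eq_zero_or_pos f.totalDegree with h | h
    · rw [h, zero_mul] at hk
      omega
    · exact h
  rw [algebraicIndependent_iff] at hdep
  push_neg at hdep
  obtain ⟨P, hP0, hPne⟩ := hdep
  have hex : ∃ N, weightedHomogeneousComponent ![f.totalDegree, g.totalDegree] N P ≠ 0 := by
    by_contra h
    push_neg at h
    apply hPne
    rw [← sum_weightedHomogeneousComponent ![f.totalDegree, g.totalDegree] P]
    simp only [h]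
    exact finsum_zero
  obtain ⟨N, hN⟩ := hex
  have hcomp0 := aeval_component_zero hFhom hGhom P hP0 N
  obtain ⟨c, hc⟩ := key_lemma hd hk hFne
    (weightedHomogeneousComponent ![f.totalDegree, g.totalDegree] N P) hN
    (weightedHomogeneousComponent_isWeightedHomogeneous N P) hcomp0
  apply hgf
  rw [hc]
  exact Subalgebra.mul_mem _
    (by rw [← algebraMap_eq]; exact Subalgebra.algebraMap_mem _ c)
    (Subalgebra.pow_mem _ (Algebra.self_mem_adjoin_singleton ℂ F) k)
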